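/- Let μ be a probability measure on a countable group G and let T : ℓ²(G) → ℓ²(G) be the right convolution operator (T f)(g) = Σ_{h ∈ G} μ(h) f(g h⁻¹). If G is amenable, then the operator norm of T equals 1. -/

import Mathlib

open Filter
open scoped symmDiff ENNReal

/-- A Følner sequence for a group `G`: a sequence of nonempty finite subsets which is
asymptotically invariant under left translations. Its existence characterises amenability
for countable groups. -/
def IsFolner {G : Type*} [Group G] [DecidableEq G] (F : ℕ → Finset G) : Prop :=
  (∀ n, (F n).Nonempty) ∧
  ∀ g : G, Tendsto
    (fun n => (((F n) ∆ ((F n).image fun x => g * x)).card : ℝ) / (F n).card)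
    atTop (nhds 0)

set_option linter.unusedSectionVars false

namespace DayAux

variable {G : Type*} [Group G] [DecidableEq G]

lemma two_toReal : ((2 : ℝ≥0∞).toReal) = 2 := by norm_num

lemma rpow_two' (x : ℝ) : x ^ ((2 : ℝ≥0∞).toReal) = x ^ 2 := by
  rw [two_toReal, show (2:ℝ) = ((2:ℕ):ℝ) by norm_num, Real.rpow_natCast]

/-- evaluation at a point as a continuous linear map on `ℓ²(G)`. -/
noncomputable def eval (g : G) : lp (fun _ : G => ℝ) 2 →L[ℝ] ℝ :=
  LinearMap.mkContinuous
    { toFun := fun f => f g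
      map_add' := fun f₁ f₂ => by simp [lp.coeFn_add]
      map_smul' := fun c f => by simp [lp.coeFn_smul] }
    1 (fun f => by
      rw [one_mul]; exact lp.norm_apply_le_norm (by norm_num) f g)

@[simp] lemma eval_apply (g : G) (f : lp (fun _ : G => ℝ) 2) : eval g f = f g := rfl

lemma memℓp_comp (h : G) (f : lp (fun _ : G => ℝ) 2) :
    Memℓp (fun g => f (g * h⁻¹)) 2 := by
  have hf := lp.memℓp f
  rw [memℓp_gen_iff (by norm_num)] at hf ⊢
  exact ((Equiv.mulRight h⁻¹).summable_iff
    (f := fun g => ‖f g‖ ^ ((2:ℝ≥0∞).toReal))).2 hf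

/-- right translation as a linear isometry of `ℓ²(G)`. -/
noncomputable def rt (h : G) : lp (fun _ : G => ℝ) 2 →ₗᵢ[ℝ] lp (fun _ : G => ℝ) 2 where
  toFun f := ⟨fun g => f (g * h⁻¹), memℓp_comp h f⟩
  map_add' f₁ f₂ := by apply lp.ext; funext g; simp [lp.coeFn_add]; rfl
  map_smul' c f := by apply lp.ext; funext g; simp [lp.coeFn_smul]
  norm_map' f := by
    have h2 : (0:ℝ) < (2:ℝ≥0∞).toReal := by norm_num
    have e1 := lp.norm_rpow_eq_tsum h2 (⟨fun g => f (g * h⁻¹), memℓp_comp h f⟩ :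
      lp (fun _ : G => ℝ) 2)
    have e2 := lp.norm_rpow_eq_tsum h2 f
    have e3 : (∑' g : G, ‖f (g * h⁻¹)‖ ^ ((2:ℝ≥0∞).toReal))
        = ∑' g : G, ‖f g‖ ^ ((2:ℝ≥0∞).toReal) :=
      (Equiv.mulRight h⁻¹).tsum_eq (fun g => ‖f g‖ ^ ((2:ℝ≥0∞).toReal))
    have := e1.trans (e3.trans e2.symm)
    rw [rpow_two', rpow_two'] at this
    exact (sq_eq_sq₀ (norm_nonneg _) (norm_nonneg _)).1 this

@[simp] lemma rt_apply (h : G) (f : lp (fun _ : G => ℝ) 2) (g : G) :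
    (rt h f) g = f (g * h⁻¹) := rfl


/-- If `f ∈ ℓ²(G)` vanishes off a finite set `s`, then `‖f‖² = ∑_{g∈s} f g ^ 2`. -/
lemma norm_sq_eq (f : lp (fun _ : G => ℝ) 2) (s : Finset G)
    (hs : ∀ g ∉ s, f g = 0) : ‖f‖ ^ 2 = ∑ g ∈ s, (f g) ^ 2 := by
  have h2 : (0:ℝ) < (2:ℝ≥0∞).toReal := by norm_num
  have e := lp.norm_rpow_eq_tsum h2 f
  rw [rpow_two'] at e
  rw [e, tsum_eq_sum (s := s) (fun g hg => by
    rw [hs g hg]; simp [Real.zero_rpow (by norm_num : ((2:ℝ≥0∞).toReal) ≠ 0)])]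
  exact Finset.sum_congr rfl fun g _ => by rw [rpow_two', Real.norm_eq_abs, sq_abs]

lemma memℓp_ind (s : Finset G) :
    Memℓp (fun g : G => if g ∈ s then (1:ℝ) else 0) 2 := by
  apply memℓp_gen
  apply summable_of_ne_finset_zero (s := s)
  intro g hg
  simp [hg, Real.zero_rpow (by norm_num : ((2:ℝ≥0∞).toReal) ≠ 0)]

/-- indicator of a finite set as an element of `ℓ²(G)`. -/
noncomputable def ind (s : Finset G) : lp (fun _ : G => ℝ) 2 :=
  ⟨fun g => if g ∈ s then (1:ℝ) else 0, memℓp_ind s⟩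

@[simp] lemma ind_apply (s : Finset G) (g : G) :
    (ind s) g = if g ∈ s then (1:ℝ) else 0 := rfl

lemma norm_ind (s : Finset G) : ‖ind s‖ = Real.sqrt s.card := by
  have h : ‖ind s‖ ^ 2 = (s.card : ℝ) := by
    rw [norm_sq_eq (ind s) s (fun g hg => by simp [hg])]
    simp
  rw [← h, Real.sqrt_sq (norm_nonneg _)]

lemma norm_ind_sub_ind (s t : Finset G) :
    ‖ind s - ind t‖ = Real.sqrt ((s ∆ t).card) := by
  have h : ‖ind s - ind t‖ ^ 2 = ((s ∆ t).card : ℝ) := by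
    rw [norm_sq_eq (ind s - ind t) (s ∆ t) (fun g hg => by
      rw [Finset.mem_symmDiff] at hg
      push_neg at hg
      by_cases hgs : g ∈ s
      · have := hg.1 hgs
        simp [lp.coeFn_sub, hgs, this]
      · by_cases hgt : g ∈ t
        · have := hg.2 hgt
          simp [lp.coeFn_sub, hgs, hgt] at *
        · simp [lp.coeFn_sub, hgs, hgt])]
    have : ∀ g ∈ s ∆ t, ((ind s - ind t : lp (fun _ : G => ℝ) 2)) g ^ 2 = 1 := by
      intro g hg
      rw [Finset.mem_symmDiff] at hg
      rcases hg with ⟨h1, h2⟩ | ⟨h1, h2⟩ <;> simp [lp.coeFn_sub, h1, h2]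
    rw [Finset.sum_congr rfl this]
    simp
  rw [← h, Real.sqrt_sq (norm_nonneg _)]


lemma summable_aux (μ : G → ℝ) (hμ : Summable μ) (hμ0 : ∀ g, 0 ≤ μ g) (C : ℝ)
    (v : G → lp (fun _ : G => ℝ) 2) (hv : ∀ h, ‖v h‖ ≤ C) :
    Summable (fun h => μ h • v h) := by
  apply Summable.of_norm
  apply Summable.of_nonneg_of_le (fun h => norm_nonneg _) (fun h => ?_) (hμ.mul_right C)
  rw [norm_smul, Real.norm_eq_abs, abs_of_nonneg (hμ0 h)]
  exact mul_le_mul_of_nonneg_left (hv h) (hμ0 h)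

lemma T_eq (μ : G → ℝ) (hμ : Summable μ) (hμ0 : ∀ g, 0 ≤ μ g)
    (T : lp (fun _ : G => ℝ) 2 →L[ℝ] lp (fun _ : G => ℝ) 2)
    (hT : ∀ (f : lp (fun _ : G => ℝ) 2) (g : G),
      (T f).1 g = ∑' h : G, μ h * f.1 (g * h⁻¹))
    (f : lp (fun _ : G => ℝ) 2) :
    T f = ∑' h : G, μ h • rt h f := by
  have hs : Summable (fun h : G => μ h • rt h f) :=
    summable_aux μ hμ hμ0 ‖f‖ _ (fun h => le_of_eq ((rt h).norm_map f))
  apply lp.ext; funext g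
  calc (T f) g = ∑' h : G, μ h * f (g * h⁻¹) := hT f g
    _ = ∑' h : G, eval g (μ h • rt h f) := by
        apply tsum_congr; intro h
        rw [map_smul]
        simp [smul_eq_mul]
    _ = eval g (∑' h : G, μ h • rt h f) := ((eval g).map_tsum hs).symm
    _ = (∑' h : G, μ h • rt h f) g := rfl

lemma rt_ind (h : G) (s : Finset G) :
    rt h (ind s) = ind (s.image (· * h)) := by
  apply lp.ext; funext g
  show (if g * h⁻¹ ∈ s then (1:ℝ) else 0) = (if g ∈ s.image (· * h) then (1:ℝ) else 0)
  congr 1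
  simp only [eq_iff_iff, Finset.mem_image]
  constructor
  · intro hm; exact ⟨g * h⁻¹, hm, by group⟩
  · rintro ⟨a, ha, rfl⟩; simpa using ha

lemma image_card_eq (h : G) (F : Finset G) :
    (((F.image fun x => x⁻¹).image (· * h)) ∆ (F.image fun x => x⁻¹)).card
      = (F ∆ (F.image fun x => h⁻¹ * x)).card := by
  have e1 : (F.image fun x => x⁻¹).image (· * h)
      = (F.image fun x => h⁻¹ * x).image fun x => x⁻¹ := by
    rw [Finset.image_image, Finset.image_image]
    apply Finset.image_congr
    intro x _
    simp [mul_inv_rev]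
  rw [e1, ← Finset.image_symmDiff _ _ inv_injective,
    Finset.card_image_of_injective _ inv_injective, symmDiff_comm]

end DayAux

set_option maxHeartbeats 1000000 in
open DayAux in
/-- Day's theorem (one direction): if `G` is a countable amenable group and `μ` a probability
measure on `G`, then the right convolution operator `(T f)(g) = Σ_h μ(h) f(g h⁻¹)` on `ℓ²(G)`
has operator norm `1`. -/
theorem stmt5 {G : Type*} [Group G] [Countable G] [DecidableEq G]
    (μ : G → ℝ) (hμ0 : ∀ g, 0 ≤ μ g) (hμ1 : ∑' g : G, μ g = 1)
    (T : lp (fun _ : G => ℝ) 2 →L[ℝ] lp (fun _ : G => ℝ) 2)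
    (hT : ∀ (f : lp (fun _ : G => ℝ) 2) (g : G),
      (T f).1 g = ∑' h : G, μ h * f.1 (g * h⁻¹))
    (hG : ∃ F : ℕ → Finset G, IsFolner F) :
    ‖T‖ = 1 := by
  obtain ⟨F, hne, hF⟩ := hG
  have hμsum : Summable μ := by
    by_contra hc
    rw [tsum_eq_zero_of_not_summable hc] at hμ1
    norm_num at hμ1
  -- upper bound
  have hub : ‖T‖ ≤ 1 := by
    apply T.opNorm_le_bound zero_le_one
    intro f
    rw [T_eq μ hμsum hμ0 T hT f, one_mul]
    have heq : ∀ h : G, ‖μ h • rt h f‖ = μ h * ‖f‖ := fun h => by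
      rw [norm_smul, Real.norm_eq_abs, abs_of_nonneg (hμ0 h), (rt h).norm_map]
    have hs : Summable (fun h : G => ‖μ h • rt h f‖) :=
      (hμsum.mul_right ‖f‖).congr fun h => (heq h).symm
    calc ‖∑' h : G, μ h • rt h f‖ ≤ ∑' h : G, ‖μ h • rt h f‖ := norm_tsum_le_tsum_norm hs
      _ = ∑' h : G, μ h * ‖f‖ := tsum_congr heq
      _ = 1 * ‖f‖ := by rw [tsum_mul_right, hμ1]
      _ = ‖f‖ := one_mul _
  -- the normalized indicator functions of the inverted Følner sets
  set c : ℕ → ℝ := fun n => ((F n).card : ℝ) with hc_def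
  have hcpos : ∀ n, 0 < c n := fun n => by
    have : 0 < (F n).card := Finset.card_pos.2 (hne n)
    simp only [hc_def]
    exact_mod_cast this
  set A : ℕ → Finset G := fun n => (F n).image (fun x => x⁻¹) with hA_def
  set fn : ℕ → lp (fun _ : G => ℝ) 2 :=
    fun n => (Real.sqrt (c n))⁻¹ • ind (A n) with hfn_def
  have hsqrt_pos : ∀ n, 0 < Real.sqrt (c n) := fun n => Real.sqrt_pos.2 (hcpos n)
  have hAcard : ∀ n, ((A n).card : ℝ) = c n := fun n => by
    rw [hA_def]; simp [Finset.card_image_of_injective _ inv_injective]; rfl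
  have hfn_norm : ∀ n, ‖fn n‖ = 1 := by
    intro n
    rw [hfn_def]
    simp only [norm_smul, Real.norm_eq_abs, norm_ind, hAcard,
      abs_of_nonneg (inv_nonneg.2 (Real.sqrt_nonneg (c n)))]
    exact inv_mul_cancel₀ (ne_of_gt (hsqrt_pos n))
  -- the key Følner estimate
  have hdiff_norm : ∀ h n, ‖rt h (fn n) - fn n‖
      = (Real.sqrt (c n))⁻¹ * Real.sqrt ((F n ∆ ((F n).image fun x => h⁻¹ * x)).card) := by
    intro h n
    rw [hfn_def]
    simp only [map_smul]
    rw [← smul_sub, norm_smul, Real.norm_eq_abs,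
      abs_of_nonneg (inv_nonneg.2 (Real.sqrt_nonneg (c n))), rt_ind, norm_ind_sub_ind,
      image_card_eq]
  have hdiff_tendsto : ∀ h : G,
      Tendsto (fun n => ‖rt h (fn n) - fn n‖) atTop (nhds 0) := by
    intro h
    have h1 : Tendsto (fun n =>
        ((F n ∆ ((F n).image fun x => h⁻¹ * x)).card : ℝ) / c n) atTop (nhds 0) := hF h⁻¹
    have h2 := h1.sqrt
    rw [Real.sqrt_zero] at h2
    apply h2.congr
    intro n
    rw [hdiff_norm h n, Real.sqrt_div' _ (le_of_lt (hcpos n))]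
    · ring
  have hdiff_le : ∀ h n, ‖rt h (fn n) - fn n‖ ≤ 2 := fun h n => by
    calc ‖rt h (fn n) - fn n‖ ≤ ‖rt h (fn n)‖ + ‖fn n‖ := norm_sub_le _ _
      _ = 2 := by rw [(rt h).norm_map, hfn_norm n]; norm_num
  set ε : ℕ → ℝ := fun n => ∑' h : G, μ h * ‖rt h (fn n) - fn n‖ with hε_def
  have hε_tendsto : Tendsto ε atTop (nhds 0) := by
    have := tendsto_tsum_of_dominated_convergence (𝓕 := atTop)
      (f := fun n h => μ h * ‖rt h (fn n) - fn n‖) (g := fun _ => (0:ℝ))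
      (bound := fun h => 2 * μ h) (hμsum.mul_left 2)
      (fun h => by simpa using (hdiff_tendsto h).const_mul (μ h))
      (Filter.Eventually.of_forall fun n h => by
        have hb : μ h * ‖rt h (fn n) - fn n‖ ≤ 2 * μ h := by
          rw [mul_comm 2 (μ h)]
          exact mul_le_mul_of_nonneg_left (hdiff_le h n) (hμ0 h)
        simpa [Real.norm_eq_abs, abs_of_nonneg (mul_nonneg (hμ0 h) (norm_nonneg _)),
          abs_of_nonneg (hμ0 h)] using hb)
    simpa using this
  have hTfn : ∀ n, ‖T (fn n) - fn n‖ ≤ ε n := by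
    intro n
    have h1 : Summable fun h : G => μ h • rt h (fn n) :=
      summable_aux μ hμsum hμ0 1 _ (fun h => le_of_eq (by rw [(rt h).norm_map, hfn_norm]))
    have h2 : Summable fun h : G => μ h • fn n :=
      summable_aux μ hμsum hμ0 1 _ (fun h => le_of_eq (hfn_norm n))
    have hrepr : T (fn n) - fn n = ∑' h : G, μ h • (rt h (fn n) - fn n) := by
      have e0 : (∑' h : G, μ h • (rt h (fn n) - fn n))
          = ∑' h : G, (μ h • rt h (fn n) - μ h • fn n) :=
        tsum_congr fun h => smul_sub _ _ _
      have e1 : (∑' h : G, (μ h • rt h (fn n) - μ h • fn n))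
          = (∑' h : G, μ h • rt h (fn n)) - ∑' h : G, μ h • fn n := Summable.tsum_sub h1 h2
      have e2 : (∑' h : G, μ h • fn n) = fn n := by
        rw [Summable.tsum_smul_const hμsum, hμ1, one_smul]
      rw [e0, e1, e2, ← T_eq μ hμsum hμ0 T hT]
    rw [hrepr]
    have hsn : Summable fun h : G => ‖μ h • (rt h (fn n) - fn n)‖ := by
      apply Summable.of_nonneg_of_le (fun h => norm_nonneg _) (fun h => ?_) (hμsum.mul_right 2)
      rw [norm_smul, Real.norm_eq_abs, abs_of_nonneg (hμ0 h)]
      exact mul_le_mul_of_nonneg_left (hdiff_le h n) (hμ0 h)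
    refine le_trans (norm_tsum_le_tsum_norm hsn) (le_of_eq (tsum_congr fun h => ?_))
    rw [norm_smul, Real.norm_eq_abs, abs_of_nonneg (hμ0 h)]
  have hlb : (1:ℝ) ≤ ‖T‖ := by
    have hev : ∀ n, 1 - ε n ≤ ‖T‖ := by
      intro n
      have h1 : ‖T (fn n)‖ ≤ ‖T‖ := by
        have := T.le_opNorm (fn n)
        rwa [hfn_norm n, mul_one] at this
      have h2 : ‖fn n‖ - ‖T (fn n)‖ ≤ ‖fn n - T (fn n)‖ := norm_sub_norm_le _ _
      rw [norm_sub_rev, hfn_norm n] at h2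
      have := hTfn n
      linarith
    have hlim : Tendsto (fun n => 1 - ε n) atTop (nhds 1) := by
      simpa using (tendsto_const_nhds (x := (1:ℝ))).sub hε_tendsto
    exact le_of_tendsto hlim (Filter.Eventually.of_forall hev)
  exact le_antisymm hub hlb
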